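/- Let M_T̂ be the stochastic matrix constructed from substochastic P_T (spectral radius < 1) and nonnegative P_{T,R}, P_{T,D} with P_{T,R} e + P_T e + P_{T,D} e = e, as in the random-surfer model (blocks R' → T and D' → T via e μ_T, and T → (R', T, D') via (P_{T,R}, P_T, P_{T,D})). If φ is ANY stationary probability vector of M_T̂ with blocks (φ_{R'}, φ_T, φ_{D'}), then φ_{R'} = φ_T P_{T,R}, φ_{D'} = φ_T P_{T,D}, and φ_T is a stationary vector of Q_T := P_T + (e - P_T e) μ_T scaled so that φ_T e = 1/(1+θ_T). -/

import Mathlib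

open Matrix

/-- The extended transient-class transition matrix `M_T̂` of the random-surfer model:
rows in `R'` and `D'` jump to `T` uniformly, rows in `T` move via `[P_TR | P_T | P_TD]`. -/
noncomputable def Mhat {r n d : ℕ} (P_TR : Matrix (Fin n) (Fin r) ℝ)
    (P_T : Matrix (Fin n) (Fin n) ℝ) (P_TD : Matrix (Fin n) (Fin d) ℝ) :
    Matrix (Fin r ⊕ Fin n ⊕ Fin d) (Fin r ⊕ Fin n ⊕ Fin d) ℝ :=
  Matrix.of fun p q =>
    match p, q with
    | Sum.inl _, Sum.inr (Sum.inl _) => (n : ℝ)⁻¹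
    | Sum.inl _, _ => 0
    | Sum.inr (Sum.inl i), Sum.inl j => P_TR i j
    | Sum.inr (Sum.inl i), Sum.inr (Sum.inl j) => P_T i j
    | Sum.inr (Sum.inl i), Sum.inr (Sum.inr j) => P_TD i j
    | Sum.inr (Sum.inr _), Sum.inr (Sum.inl _) => (n : ℝ)⁻¹
    | Sum.inr (Sum.inr _), _ => 0

theorem stmt9 {r n d : ℕ} (hn : 0 < n)
    (P_TR : Matrix (Fin n) (Fin r) ℝ)
    (P_T : Matrix (Fin n) (Fin n) ℝ)
    (P_TD : Matrix (Fin n) (Fin d) ℝ)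
    (hTRnn : ∀ i j, 0 ≤ P_TR i j)
    (hTnn : ∀ i j, 0 ≤ P_T i j)
    (hTDnn : ∀ i j, 0 ≤ P_TD i j)
    (hsub : ∀ i, ∑ j, P_T i j ≤ 1)
    (hρ : spectralRadius ℝ P_T < 1)
    (hrows : ∀ i, (∑ j, P_TR i j) + (∑ j, P_T i j) + (∑ j, P_TD i j) = 1)
    (e : Fin n → ℝ) (he : e = fun _ => 1)
    (μ : Fin n → ℝ) (hμ : μ = (n : ℝ)⁻¹ • e)
    (lamT : Fin n → ℝ)
    (hlamT : lamT = ((e ᵥ* (1 - P_T)⁻¹) ⬝ᵥ e)⁻¹ • (e ᵥ* (1 - P_T)⁻¹))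
    (θ : ℝ) (hθ : θ = 1 - (lamT ᵥ* P_T) ⬝ᵥ e)
    (Q : Matrix (Fin n) (Fin n) ℝ) (hQ : Q = P_T + vecMulVec (e - P_T *ᵥ e) μ)
    -- φ is ANY stationary probability vector of M_T̂:
    (φ : Fin r ⊕ Fin n ⊕ Fin d → ℝ)
    (hφnn : ∀ p, 0 ≤ φ p) (hφ1 : ∑ p, φ p = 1)
    (hφstat : φ ᵥ* Mhat P_TR P_T P_TD = φ)
    (φR : Fin r → ℝ) (hφR : φR = fun j => φ (Sum.inl j))
    (φT : Fin n → ℝ) (hφT : φT = fun j => φ (Sum.inr (Sum.inl j)))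
    (φD : Fin d → ℝ) (hφD : φD = fun j => φ (Sum.inr (Sum.inr j))) :
    φR = φT ᵥ* P_TR ∧ φD = φT ᵥ* P_TD ∧
      φT ᵥ* Q = φT ∧ φT ⬝ᵥ e = 1 / (1 + θ) := by
  have hn' : (0:ℝ) < n := by exact_mod_cast hn
  -- componentwise stationarity
  have hR : ∀ j, φ (Sum.inl j) = ∑ i, φ (Sum.inr (Sum.inl i)) * P_TR i j := by
    intro j
    have := congrFun hφstat (Sum.inl j)
    simp [vecMul, dotProduct, Mhat, Fintype.sum_sum_type] at this
    linarith [this]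
  have hDe : ∀ j, φ (Sum.inr (Sum.inr j)) = ∑ i, φ (Sum.inr (Sum.inl i)) * P_TD i j := by
    intro j
    have := congrFun hφstat (Sum.inr (Sum.inr j))
    simp [vecMul, dotProduct, Mhat, Fintype.sum_sum_type] at this
    linarith [this]
  set sR : ℝ := ∑ a, φ (Sum.inl a) with hsR
  set sT : ℝ := ∑ i, φ (Sum.inr (Sum.inl i)) with hsT
  set sD : ℝ := ∑ k, φ (Sum.inr (Sum.inr k)) with hsD
  have hsum : sR + sT + sD = 1 := by
    have := hφ1
    simp only [Fintype.sum_sum_type] at this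
    rw [hsR, hsT, hsD]; linarith [this]
  have hTT : ∀ j, φ (Sum.inr (Sum.inl j))
      = (1 - sT) * (n:ℝ)⁻¹ + ∑ i, φ (Sum.inr (Sum.inl i)) * P_T i j := by
    intro j
    have h := congrFun hφstat (Sum.inr (Sum.inl j))
    simp [vecMul, dotProduct, Mhat, Fintype.sum_sum_type, ← Finset.sum_mul] at h
    have : sR * (n:ℝ)⁻¹ + (∑ i, φ (Sum.inr (Sum.inl i)) * P_T i j) + sD * (n:ℝ)⁻¹
        = φ (Sum.inr (Sum.inl j)) := by
      rw [hsR, hsD]; linarith [h]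
    have key : (1 - sT) * (n:ℝ)⁻¹ = sR * (n:ℝ)⁻¹ + sD * (n:ℝ)⁻¹ := by
      have h2 : sR + sD = 1 - sT := by linarith
      rw [← h2]; ring
    linarith [this, key]
  -- first two conclusions
  subst hφR hφT hφD
  refine ⟨funext fun j => by rw [hR]; simp [vecMul, dotProduct],
          funext fun j => by rw [hDe]; simp [vecMul, dotProduct], ?_, ?_⟩
  · -- φT ᵥ* Q = φT
    subst hQ hμ he
    funext j
    have ha : ∑ jj, ∑ i, φ (Sum.inr (Sum.inl i)) * P_T i jj = 2 * sT - 1 := by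
      have : ∑ jj, φ (Sum.inr (Sum.inl jj))
          = ∑ jj, ((1 - sT) * (n:ℝ)⁻¹ + ∑ i, φ (Sum.inr (Sum.inl i)) * P_T i jj) := by
        exact Finset.sum_congr rfl fun jj _ => hTT jj
      simp only [Finset.sum_add_distrib, Finset.sum_const, Finset.card_univ,
        Fintype.card_fin, nsmul_eq_mul] at this
      have hne : (n:ℝ) ≠ 0 := ne_of_gt hn'
      rw [← hsT] at this
      field_simp at this
      linarith [this]
    have hb : ∑ x, φ (Sum.inr (Sum.inl x)) * ∑ jj, P_T x jj = 2 * sT - 1 := by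
      calc ∑ x, φ (Sum.inr (Sum.inl x)) * ∑ jj, P_T x jj
          = ∑ x, ∑ jj, φ (Sum.inr (Sum.inl x)) * P_T x jj := by
            simp [Finset.mul_sum]
        _ = ∑ jj, ∑ x, φ (Sum.inr (Sum.inl x)) * P_T x jj := Finset.sum_comm
        _ = 2 * sT - 1 := ha
    simp only [vecMul, dotProduct, Matrix.add_apply, vecMulVec_apply, Pi.smul_apply,
      smul_eq_mul, Pi.sub_apply, mulVec, dotProduct, mul_one]
    have step : ∀ x, φ (Sum.inr (Sum.inl x)) * (P_T x j + (1 - ∑ jj, P_T x jj) * (n:ℝ)⁻¹)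
        = φ (Sum.inr (Sum.inl x)) * P_T x j + φ (Sum.inr (Sum.inl x)) * (n:ℝ)⁻¹
          - (φ (Sum.inr (Sum.inl x)) * ∑ jj, P_T x jj) * (n:ℝ)⁻¹ := fun x => by ring
    rw [Finset.sum_congr rfl (fun x _ => step x), Finset.sum_sub_distrib,
      Finset.sum_add_distrib, ← Finset.sum_mul, ← Finset.sum_mul, ← hsT, hb, hTT j]
    ring
  · -- φT ⬝ᵥ e = 1/(1+θ)
    -- invertibility of 1 - P_T
    have hu : IsUnit (1 - P_T) := by
      by_contra h
      have h1 : (1:ℝ) ∈ spectrum ℝ P_T := by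
        rw [spectrum.mem_iff]; simpa using h
      have : (1:ENNReal) ≤ spectralRadius ℝ P_T := by
        have := le_iSup₂ (f := fun k (_ : k ∈ spectrum ℝ P_T) => (‖k‖₊ : ENNReal)) 1 h1
        simpa [spectralRadius] using this
      exact absurd hρ (not_lt.2 this)
    have hdet : IsUnit (1 - P_T).det := (isUnit_iff_isUnit_det _).mp hu
    set A : Matrix (Fin n) (Fin n) ℝ := 1 - P_T with hA
    set w : Fin n → ℝ := e ᵥ* A⁻¹ with hw
    set c : ℝ := w ⬝ᵥ e with hc
    -- φT ᵥ* A = ((1-sT) * n⁻¹) • e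
    have hstatv : (fun j => φ (Sum.inr (Sum.inl j))) ᵥ* A = ((1 - sT) * (n:ℝ)⁻¹) • e := by
      rw [hA, Matrix.vecMul_sub, Matrix.vecMul_one]
      funext j
      simp only [Pi.sub_apply, Pi.smul_apply, smul_eq_mul, he, vecMul, dotProduct, mul_one]
      linarith [hTT j]
    have hφTw : (fun j => φ (Sum.inr (Sum.inl j))) = ((1 - sT) * (n:ℝ)⁻¹) • w := by
      have h1 : (fun j => φ (Sum.inr (Sum.inl j))) ᵥ* (A * A⁻¹)
          = (((1 - sT) * (n:ℝ)⁻¹) • e) ᵥ* A⁻¹ := by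
        rw [← Matrix.vecMul_vecMul, hstatv]
      rw [Matrix.mul_nonsing_inv _ hdet, Matrix.vecMul_one] at h1
      rw [h1, hw, Matrix.smul_vecMul]
    have hee : e ⬝ᵥ e = (n:ℝ) := by simp [he, dotProduct]
    have hsTc : sT = (1 - sT) * (n:ℝ)⁻¹ * c := by
      have := congrArg (fun v => v ⬝ᵥ e) hφTw
      simp only [smul_dotProduct, smul_eq_mul] at this
      rw [← hc] at this
      have hsTe : (fun j => φ (Sum.inr (Sum.inl j))) ⬝ᵥ e = sT := by
        simp [dotProduct, he, hsT]
      rw [hsTe] at this; exact this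
    -- sT ≠ 0
    have hsT0 : sT ≠ 0 := by
      intro h0
      have hTz : ∀ i, φ (Sum.inr (Sum.inl i)) = 0 := by
        intro i
        have := (Finset.sum_eq_zero_iff_of_nonneg (fun i _ => hφnn (Sum.inr (Sum.inl i)))).mp
          (by rw [← hsT]; exact h0) i (Finset.mem_univ i)
        exact this
      have hRz : sR = 0 := by
        rw [hsR]
        apply Finset.sum_eq_zero
        intro a _
        rw [hR a]
        exact Finset.sum_eq_zero fun i _ => by rw [hTz i]; ring
      have hDz : sD = 0 := by
        rw [hsD]
        apply Finset.sum_eq_zero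
        intro a _
        rw [hDe a]
        exact Finset.sum_eq_zero fun i _ => by rw [hTz i]; ring
      rw [hRz, h0, hDz] at hsum; norm_num at hsum
    have hcne : c ≠ 0 := by
      intro h0; rw [h0, mul_zero] at hsTc; exact hsT0 hsTc
    have hcn : c + (n:ℝ) ≠ 0 := by
      intro h0
      have hc' : c = -(n:ℝ) := by linarith
      rw [hc'] at hsTc
      have hne : (n:ℝ) ≠ 0 := ne_of_gt hn'
      field_simp at hsTc
      nlinarith [hsTc, hn']
    -- w ᵥ* P_T = w - e
    have hwA : w ᵥ* A = e := by
      rw [hw, Matrix.vecMul_vecMul, Matrix.nonsing_inv_mul _ hdet, Matrix.vecMul_one]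
    have hwP : w ᵥ* P_T = w - e := by
      have : w ᵥ* A = w - w ᵥ* P_T := by
        rw [hA, Matrix.vecMul_sub, Matrix.vecMul_one]
      rw [this] at hwA
      funext i
      have := congrFun hwA i
      simp only [Pi.sub_apply] at this ⊢
      linarith [this]
    -- θ = n / c
    have hθv : θ = (n:ℝ) / c := by
      rw [hθ, hlamT, Matrix.smul_vecMul, smul_dotProduct, hwP, sub_dotProduct,
        hee, ← hc, smul_eq_mul]
      field_simp
      ring
    have hgoal : (fun j => φ (Sum.inr (Sum.inl j))) ⬝ᵥ e = sT := by
      simp [dotProduct, he, hsT]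
    rw [hgoal, hθv]
    have hne : (n:ℝ) ≠ 0 := ne_of_gt hn'
    have hni : (n:ℝ)⁻¹ * n = 1 := inv_mul_cancel₀ hne
    have hsT2 : sT * ((n:ℝ) + c) = c := by
      have h2 : sT * (n:ℝ) = (1 - sT) * c := by
        linear_combination (n:ℝ) * hsTc + (1 - sT) * c * hni
      linarith [h2]
    field_simp
    linear_combination hsT2
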